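/- Let A : ℓ² → Y be a bounded linear operator between Hilbert spaces, y ∈ Y, α ≥ β > 0. If x ∈ ℓ² is a minimizer of J(x) = ½‖Ax − y‖² + α‖x‖₁² − β‖x‖₂², then for every index i and with x̄ := x − xᵢeᵢ, one has α‖x‖₁² − β‖x‖₂² − (α‖x̄‖₁² − β‖x̄‖₂²) ≤ ½ xᵢ² ‖Aeᵢ‖² − xᵢ⟨Aeᵢ, Ax − y⟩. -/

import Mathlib

open scoped RealInnerProductSpace

/-- Inequality (3.1)/(3.2): if `x` minimizes
`J(z) = ½‖Az − y‖² + α‖z‖₁² − β‖z‖₂²` on `ℓ²` (with `α ≥ β > 0`), then for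
every index `i`, with `x̄ = x − xᵢeᵢ`,
`α‖x‖₁² − β‖x‖₂² − (α‖x̄‖₁² − β‖x̄‖₂²) ≤ ½xᵢ²‖Aeᵢ‖² − xᵢ⟨Aeᵢ, Ax − y⟩`. -/
theorem stmt_7 {Y : Type*} [NormedAddCommGroup Y] [InnerProductSpace ℝ Y]
    (A : lp (fun _ : ℕ => ℝ) 2 →L[ℝ] Y) (y : Y) (α β : ℝ) (hβ : 0 < β) (hαβ : β ≤ α)
    (x : lp (fun _ : ℕ => ℝ) 2)
    (hx1 : Summable (fun i => |x i|))
    (hmin : ∀ z : lp (fun _ : ℕ => ℝ) 2, Summable (fun i => |z i|) →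
      (1 / 2) * ‖A x - y‖ ^ 2 + α * (∑' i, |x i|) ^ 2 - β * ‖x‖ ^ 2
        ≤ (1 / 2) * ‖A z - y‖ ^ 2 + α * (∑' i, |z i|) ^ 2 - β * ‖z‖ ^ 2) :
    ∀ i : ℕ, ∀ xbar : lp (fun _ : ℕ => ℝ) 2,
      xbar = x - x i • lp.single 2 i (1 : ℝ) →
      (α * (∑' j, |x j|) ^ 2 - β * ‖x‖ ^ 2)
          - (α * (∑' j, |xbar j|) ^ 2 - β * ‖xbar‖ ^ 2)
        ≤ (1 / 2) * (x i) ^ 2 * ‖A (lp.single 2 i (1 : ℝ))‖ ^ 2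
            - x i * ⟪A (lp.single 2 i (1 : ℝ)), A x - y⟫ := by
  intro i xbar hxbar
  have hcoe : ∀ j, xbar j = if j = i then 0 else x j := by
    intro j
    rw [hxbar]
    by_cases h : j = i
    · subst h
      rw [lp.coeFn_sub, lp.coeFn_smul, Pi.sub_apply, Pi.smul_apply, lp.single_apply_self]
      simp
    · rw [lp.coeFn_sub, lp.coeFn_smul, Pi.sub_apply, Pi.smul_apply, lp.single_apply_ne _ _ _ h]
      simp [h]
  have hsum : Summable (fun j => |xbar j|) := by
    refine Summable.of_nonneg_of_le (fun j => abs_nonneg _) (fun j => ?_) hx1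
    rw [hcoe j]
    by_cases h : j = i <;> simp [h, abs_nonneg]
  have key := hmin xbar hsum
  have hA : A xbar - y = (A x - y) - x i • A (lp.single 2 i (1 : ℝ)) := by
    rw [hxbar, map_sub, map_smul]
    abel
  have hnorm : ‖A xbar - y‖ ^ 2 = ‖A x - y‖ ^ 2
      - 2 * (x i * ⟪A (lp.single 2 i (1 : ℝ)), A x - y⟫)
      + (x i) ^ 2 * ‖A (lp.single 2 i (1 : ℝ))‖ ^ 2 := by
    rw [hA, @norm_sub_sq_real, norm_smul, real_inner_smul_right,
      real_inner_comm]
    rw [mul_pow]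
    simp [abs_mul_abs_self, sq_abs]
  rw [hnorm] at key
  linarith
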